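/- Suppose ‖w‖ = 1 and ‖v‖ ≤ C. There exists a constant A > 0 depending only on C (and v*, m) such that ‖E_Z[g(v,w;Z)]‖² ≤ A(‖∂f/∂v(v,w)‖² + ⟨E_Z[g(v,w;Z)], ∂f/∂w(v,w)⟩). -/

import Mathlib

open InnerProductGeometry

/-- The all-ones vector in `ℝ^m`. -/
noncomputable def onesE (m : ℕ) : EuclideanSpace ℝ (Fin m) :=
  (WithLp.equiv 2 (Fin m → ℝ)).symm fun _ => 1

/-- `∂f/∂v(v,w) = (1/4)(I+11^T)v − (1/4)((1 − 2θ(w,w*)/π)I + 11^T)v*`. -/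
noncomputable def gradV {m n : ℕ} (vs : EuclideanSpace ℝ (Fin m))
    (ws : EuclideanSpace ℝ (Fin n)) (v : EuclideanSpace ℝ (Fin m))
    (w : EuclideanSpace ℝ (Fin n)) : EuclideanSpace ℝ (Fin m) :=
  (1 / 4 : ℝ) • ((v + (∑ i, v i) • onesE m)
    - ((1 - 2 * angle w ws / Real.pi) • vs + (∑ i, vs i) • onesE m))

/-- The expected coarse gradient `E_Z[g(v,w;Z)]` (Lemma 3 of the paper), with
`h(v,v*) = ‖v‖² + (1^Tv)² − (1^Tv)(1^Tv*) + v^Tv*`. -/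
noncomputable def coarseG {m n : ℕ} (vs : EuclideanSpace ℝ (Fin m))
    (ws : EuclideanSpace ℝ (Fin n)) (v : EuclideanSpace ℝ (Fin m))
    (w : EuclideanSpace ℝ (Fin n)) : EuclideanSpace ℝ (Fin n) :=
  ((∑ i, v i ^ 2 + (∑ i, v i) ^ 2 - (∑ i, v i) * (∑ i, vs i) + ∑ i, v i * vs i)
      / (2 * Real.sqrt (2 * Real.pi))) • ‖w‖⁻¹ • w
    - (Real.cos (angle w ws / 2) * (∑ i, v i * vs i) / Real.sqrt (2 * Real.pi)) •
        ‖‖w‖⁻¹ • w + ws‖⁻¹ • (‖w‖⁻¹ • w + ws)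

/-- `∂f/∂w(v,w) = −(v^Tv*)/(2π‖w‖)·(I − ww^T/‖w‖²)w*/‖(I − ww^T/‖w‖²)w*‖`. -/
noncomputable def gradW {m n : ℕ} (vs : EuclideanSpace ℝ (Fin m))
    (ws : EuclideanSpace ℝ (Fin n)) (v : EuclideanSpace ℝ (Fin m))
    (w : EuclideanSpace ℝ (Fin n)) : EuclideanSpace ℝ (Fin n) :=
  (-(∑ i, v i * vs i) / (2 * Real.pi * ‖w‖)) •
    ‖ws - ((inner ℝ w ws : ℝ) / ‖w‖ ^ 2) • w‖⁻¹ •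
      (ws - ((inner ℝ w ws : ℝ) / ‖w‖ ^ 2) • w)

section Aux

open Real RealInnerProductSpace

/-- Pure algebraic step in the half-angle bound. -/
lemma alg_bound_aux {x si co p : ℝ} (hx0 : 0 ≤ x) (hx1 : x ≤ 1)
    (hsi0 : 0 ≤ si) (hco0 : 0 ≤ co)
    (hsiu : si ≤ x*p/2) (hcou : co ≤ (1-x)*p/2)
    (hsil : x ≤ si) (hcol : 1-x ≤ co) :
    4*(1-x)^2*si^2 + 4*x^2*co^2 ≤ p^2/4*(2*si*co) := by
  have s1 : si^2 ≤ (x*p/2)^2 := pow_le_pow_left₀ hsi0 hsiu 2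
  have c1 : co^2 ≤ ((1-x)*p/2)^2 := pow_le_pow_left₀ hco0 hcou 2
  have L1 : 4*(1-x)^2*si^2 + 4*x^2*co^2 ≤ 2*p^2*x^2*(1-x)^2 := by
    have h1 := mul_le_mul_of_nonneg_left s1 (by positivity : (0:ℝ) ≤ 4*(1-x)^2)
    have h2 := mul_le_mul_of_nonneg_left c1 (by positivity : (0:ℝ) ≤ 4*x^2)
    nlinarith
  have hxx : 0 ≤ x*(1-x) := mul_nonneg hx0 (by linarith)
  have h14 : 0 ≤ 1/4 - x*(1-x) := by nlinarith [sq_nonneg (2*x-1)]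
  have L3 : 2*p^2*x^2*(1-x)^2 ≤ p^2/2*(x*(1-x)) := by
    nlinarith [mul_nonneg (mul_nonneg (sq_nonneg p) hxx) h14]
  have L2 : x*(1-x) ≤ si*co := mul_le_mul hsil hcol (by linarith) hsi0
  have L4 : p^2/2*(x*(1-x)) ≤ p^2/2*(si*co) :=
    mul_le_mul_of_nonneg_left L2 (by positivity)
  nlinarith

/-- Key scalar inequality: for `θ ∈ [0,π]`,
`(1 − 2θ/π)² − 2cos θ(1 − 2θ/π) + 1 ≤ (π²/4)·sin θ`. -/
lemma psi_bound {θ : ℝ} (h0 : 0 ≤ θ) (h1 : θ ≤ π) :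
    (1 - 2*θ/π)^2 - 2 * Real.cos θ * (1 - 2*θ/π) + 1
      ≤ π^2/4 * Real.sin θ := by
  have hπ := Real.pi_pos
  have hsi0 : 0 ≤ Real.sin (θ/2) :=
    Real.sin_nonneg_of_nonneg_of_le_pi (by linarith) (by linarith)
  have hco0 : 0 ≤ Real.cos (θ/2) := Real.cos_nonneg_of_mem_Icc ⟨by linarith, by linarith⟩
  have hsiu : Real.sin (θ/2) ≤ θ/2 := Real.sin_le (by linarith)
  have hco_eq : Real.cos (θ/2) = Real.sin ((π - θ)/2) := by
    rw [show (π - θ)/2 = π/2 - θ/2 by ring, Real.sin_pi_div_two_sub]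
  have hcou : Real.cos (θ/2) ≤ (π - θ)/2 := by
    rw [hco_eq]; exact Real.sin_le (by linarith)
  have hsil : θ/π ≤ Real.sin (θ/2) := by
    have h := Real.mul_le_sin (x := θ/2) (by linarith) (by linarith)
    have he : 2/π * (θ/2) = θ/π := by field_simp
    linarith [he ▸ h]
  have hcol : (π - θ)/π ≤ Real.cos (θ/2) := by
    have h := Real.mul_le_sin (x := (π - θ)/2) (by linarith) (by linarith)
    have he : 2/π * ((π - θ)/2) = (π - θ)/π := by field_simp
    rw [hco_eq]; linarith [he ▸ h]
  have hcosθ : Real.cos θ = 2 * Real.cos (θ/2)^2 - 1 := by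
    rw [← Real.cos_two_mul]; ring_nf
  have hsinθ : Real.sin θ = 2 * Real.sin (θ/2) * Real.cos (θ/2) := by
    rw [← Real.sin_two_mul]; ring_nf
  have hpy : Real.sin (θ/2)^2 + Real.cos (θ/2)^2 = 1 := Real.sin_sq_add_cos_sq (θ/2)
  set x := θ/π with hxdef
  set si := Real.sin (θ/2)
  set co := Real.cos (θ/2)
  have hθx : θ = x * π := by rw [hxdef]; field_simp
  have hx0 : 0 ≤ x := by positivity
  have hx1 : x ≤ 1 := (div_le_one hπ).2 h1
  have hid : (1 - 2*θ/π)^2 - 2 * Real.cos θ * (1 - 2*θ/π) + 1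
      = 4*(1-x)^2*si^2 + 4*x^2*co^2 := by
    rw [hcosθ]
    have hτ : 1 - 2*θ/π = 1 - 2*x := by rw [hxdef]; ring
    rw [hτ]
    linear_combination (-(4*(1-x)^2)) * hpy
  rw [hid, hsinθ]
  refine alg_bound_aux hx0 hx1 hsi0 hco0 ?_ ?_ ?_ ?_
  · rw [hθx] at hsiu; linarith
  · have he : (π - θ)/2 = (1-x)*π/2 := by rw [hθx]; ring
    linarith [he ▸ hcou]
  · exact hsil
  · have he : (π - θ)/π = 1 - x := by rw [hθx]; field_simp
    linarith [he ▸ hcol]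

lemma inner_sum_eq {m : ℕ} (v vs : EuclideanSpace ℝ (Fin m)) :
    ⟪v, vs⟫ = ∑ i, v i * vs i := by
  simp [PiLp.inner_apply, RCLike.inner_apply, mul_comm]

lemma inner_ones_eq {m : ℕ} (v : EuclideanSpace ℝ (Fin m)) :
    ⟪v, onesE m⟫ = ∑ i, v i := by
  simp [PiLp.inner_apply, RCLike.inner_apply, onesE]

lemma inner_self_eq_sum {m : ℕ} (v : EuclideanSpace ℝ (Fin m)) :
    ⟪v, v⟫ = ∑ i, v i ^ 2 := by
  rw [real_inner_self_eq_norm_sq, EuclideanSpace.norm_sq_eq]; simp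

/-- For unit vectors, `cos(θ/2) = ‖w + ws‖/2`. -/
lemma cos_half_angle {n : ℕ} (w ws : EuclideanSpace ℝ (Fin n))
    (hw : ‖w‖ = 1) (hws : ‖ws‖ = 1) :
    Real.cos (angle w ws / 2) = ‖w + ws‖ / 2 := by
  have hc : Real.cos (angle w ws) = ⟪w, ws⟫ := by rw [cos_angle, hw, hws]; norm_num
  have hn2 : ‖w + ws‖^2 = 2 + 2*⟪w, ws⟫ := by
    rw [← real_inner_self_eq_norm_sq]
    simp only [inner_add_left, inner_add_right, real_inner_self_eq_norm_sq, hw, hws,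
      real_inner_comm ws w]
    ring
  have h1 : Real.cos (angle w ws / 2) = Real.sqrt ((1 + ⟪w, ws⟫)/2) := by
    rw [Real.cos_half (by linarith [angle_nonneg w ws, Real.pi_pos]) (angle_le_pi w ws), hc]
  have h2 : ‖w + ws‖ = Real.sqrt (2 + 2*⟪w, ws⟫) := by
    rw [← hn2, Real.sqrt_sq (norm_nonneg _)]
  rw [h1, h2]
  have hpos : (0:ℝ) ≤ 2 + 2*⟪w, ws⟫ := by rw [← hn2]; positivity
  have h4 : Real.sqrt 4 = 2 := by
    rw [show (4:ℝ) = 2^2 by norm_num, Real.sqrt_sq (by norm_num : (0:ℝ) ≤ 2)]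
  rw [show (1 + ⟪w, ws⟫)/2 = (2 + 2*⟪w, ws⟫)/4 by ring, Real.sqrt_div hpos, h4]

/-- Structure of the expected coarse gradient for unit `w`, `ws`. -/
lemma coarseG_eq {m n : ℕ} (vs : EuclideanSpace ℝ (Fin m)) (ws : EuclideanSpace ℝ (Fin n))
    (v : EuclideanSpace ℝ (Fin m)) (w : EuclideanSpace ℝ (Fin n))
    (hw : ‖w‖ = 1) (hws : ‖ws‖ = 1) :
    coarseG vs ws v w = (1 / (2 * Real.sqrt (2 * Real.pi))) •
      (((∑ i, v i ^ 2 + (∑ i, v i) ^ 2 - (∑ i, v i) * (∑ i, vs i) + ∑ i, v i * vs i)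
          - ∑ i, v i * vs i) • w - (∑ i, v i * vs i) • ws) := by
  unfold coarseG
  rw [hw, inv_one, one_smul, cos_half_angle w ws hw hws]
  by_cases hz : w + ws = 0
  · have hwsw : ws = -w := by linear_combination (norm := module) hz
    rw [hwsw]
    simp only [add_neg_cancel, norm_zero, inv_zero, zero_smul, smul_zero, sub_zero]
    match_scalars <;> ring
  · have hn : ‖w + ws‖ ≠ 0 := by simpa using hz
    match_scalars <;> field_simp <;> ring

/-- Structure of `gradW` for unit `w`. -/
lemma gradW_eq {m n : ℕ} (vs : EuclideanSpace ℝ (Fin m)) (ws : EuclideanSpace ℝ (Fin n))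
    (v : EuclideanSpace ℝ (Fin m)) (w : EuclideanSpace ℝ (Fin n)) (hw : ‖w‖ = 1) :
    gradW vs ws v w = (-(∑ i, v i * vs i) / (2 * Real.pi)) •
      ‖ws - ⟪w, ws⟫ • w‖⁻¹ • (ws - ⟪w, ws⟫ • w) := by
  unfold gradW
  rw [hw]
  norm_num

/-- The correlation formula:
`⟪E_Z[g], ∂f/∂w⟫ = (v^Tv*)²·sinθ / (4π√(2π))` with `sin θ = √(1 − ⟪w,ws⟫²)`. -/
lemma inner_coarseG_gradW {m n : ℕ} (vs : EuclideanSpace ℝ (Fin m))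
    (ws : EuclideanSpace ℝ (Fin n)) (v : EuclideanSpace ℝ (Fin m))
    (w : EuclideanSpace ℝ (Fin n)) (hw : ‖w‖ = 1) (hws : ‖ws‖ = 1) :
    ⟪coarseG vs ws v w, gradW vs ws v w⟫
      = (∑ i, v i * vs i)^2 * Real.sqrt (1 - ⟪w, ws⟫^2)
          / (4 * Real.pi * Real.sqrt (2 * Real.pi)) := by
  have hπ := Real.pi_pos
  have hR : (0:ℝ) < Real.sqrt (2 * Real.pi) := Real.sqrt_pos.2 (by positivity)
  have hp2 : ‖ws - ⟪w, ws⟫ • w‖^2 = 1 - ⟪w, ws⟫^2 := by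
    rw [← real_inner_self_eq_norm_sq]
    simp only [inner_sub_left, inner_sub_right, real_inner_smul_left, real_inner_smul_right,
      real_inner_self_eq_norm_sq, hw, hws, real_inner_comm ws w, norm_smul,
      Real.norm_eq_abs, mul_pow, sq_abs]
    ring
  have hp : ‖ws - ⟪w, ws⟫ • w‖ = Real.sqrt (1 - ⟪w, ws⟫^2) := by
    rw [← hp2, Real.sqrt_sq (norm_nonneg _)]
  have hu0 : (0:ℝ) ≤ 1 - ⟪w, ws⟫^2 := by rw [← hp2]; positivity
  rw [coarseG_eq vs ws v w hw hws, gradW_eq vs ws v w hw]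
  rw [real_inner_smul_left, real_inner_smul_right, real_inner_smul_right]
  have hip : ⟪((∑ i, v i ^ 2 + (∑ i, v i) ^ 2 - (∑ i, v i) * (∑ i, vs i) + ∑ i, v i * vs i)
          - ∑ i, v i * vs i) • w - (∑ i, v i * vs i) • ws, ws - ⟪w, ws⟫ • w⟫
      = -((∑ i, v i * vs i) * (1 - ⟪w, ws⟫^2)) := by
    simp only [inner_sub_left, inner_sub_right, real_inner_smul_left, real_inner_smul_right,
      real_inner_self_eq_norm_sq, hw, hws, real_inner_comm ws w, norm_smul,
      Real.norm_eq_abs, mul_pow, sq_abs]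
    ring
  rw [hip, hp]
  have hu : (Real.sqrt (1 - ⟪w, ws⟫^2))⁻¹ * (1 - ⟪w, ws⟫^2) = Real.sqrt (1 - ⟪w, ws⟫^2) := by
    rw [mul_comm, ← div_eq_mul_inv, Real.div_sqrt]
  have step : (Real.sqrt (1 - ⟪w, ws⟫^2))⁻¹ * -((∑ i, v i * vs i) * (1 - ⟪w, ws⟫^2))
      = -((∑ i, v i * vs i) * Real.sqrt (1 - ⟪w, ws⟫^2)) := by
    linear_combination (-(∑ i, v i * vs i)) * hu
  rw [step]
  field_simp
  ring

/-- `⟪v, ∂f/∂v⟫` in coordinates. -/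
lemma inner_gradV_eq {m n : ℕ} (vs : EuclideanSpace ℝ (Fin m))
    (ws : EuclideanSpace ℝ (Fin n)) (v : EuclideanSpace ℝ (Fin m))
    (w : EuclideanSpace ℝ (Fin n)) :
    ⟪v, gradV vs ws v w⟫ = (1/4) * ((∑ i, v i ^ 2) + (∑ i, v i)^2
      - (∑ i, v i) * (∑ i, vs i) - (1 - 2 * angle w ws / Real.pi) * (∑ i, v i * vs i)) := by
  unfold gradV
  rw [real_inner_smul_right, inner_sub_right, inner_add_right, inner_add_right,
    real_inner_smul_right, real_inner_smul_right, real_inner_smul_right,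
    inner_self_eq_sum, inner_ones_eq, inner_sum_eq]
  ring

end Aux

open RealInnerProductSpace

/-- For unit `w` and `‖v‖ ≤ C`, there exists `A > 0` (depending only on `C`, `v*`, `m`)
with `‖E_Z[g(v,w;Z)]‖² ≤ A(‖∂f/∂v(v,w)‖² + ⟨E_Z[g(v,w;Z)], ∂f/∂w(v,w)⟩)`. -/
theorem coarse_gradient_sufficiently_correlated {m n : ℕ}
    (vs : EuclideanSpace ℝ (Fin m)) (ws : EuclideanSpace ℝ (Fin n))
    (hws : ‖ws‖ = 1) (C : ℝ) (hC : 0 < C) :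
    ∃ A > (0 : ℝ), ∀ (v : EuclideanSpace ℝ (Fin m)) (w : EuclideanSpace ℝ (Fin n)),
      ‖w‖ = 1 → ‖v‖ ≤ C →
      ‖coarseG vs ws v w‖ ^ 2
        ≤ A * (‖gradV vs ws v w‖ ^ 2
            + (inner ℝ (coarseG vs ws v w) (gradW vs ws v w) : ℝ)) := by
  have hπ := Real.pi_pos
  have hR : (0:ℝ) < Real.sqrt (2 * Real.pi) := Real.sqrt_pos.2 (by positivity)
  refine ⟨4*C^2/Real.pi + Real.pi^2 * Real.sqrt (2*Real.pi)/4 + 1, by positivity, ?_⟩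
  intro v w hw hv
  -- abbreviations
  have hR2 : Real.sqrt (2 * Real.pi) ^ 2 = 2 * Real.pi := Real.sq_sqrt (by positivity)
  have hθ0 : 0 ≤ angle w ws := angle_nonneg w ws
  have hθπ : angle w ws ≤ Real.pi := angle_le_pi w ws
  have hcos : Real.cos (angle w ws) = ⟪w, ws⟫ := by rw [cos_angle, hw, hws]; norm_num
  have hsin : Real.sin (angle w ws) = Real.sqrt (1 - ⟪w, ws⟫^2) := by
    rw [Real.sin_eq_sqrt_one_sub_cos_sq hθ0 hθπ, hcos]
  have hc1 : |⟪w, ws⟫| ≤ 1 := by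
    have := abs_real_inner_le_norm w ws
    rwa [hw, hws, mul_one] at this
  -- norm of coarseG
  have hGnorm : ‖coarseG vs ws v w‖^2
      = (((∑ i, v i ^ 2 + (∑ i, v i) ^ 2 - (∑ i, v i) * (∑ i, vs i) + ∑ i, v i * vs i)
            - ∑ i, v i * vs i)^2
          - 2*((∑ i, v i ^ 2 + (∑ i, v i) ^ 2 - (∑ i, v i) * (∑ i, vs i) + ∑ i, v i * vs i)
            - ∑ i, v i * vs i)*(∑ i, v i * vs i)*⟪w, ws⟫
          + (∑ i, v i * vs i)^2) / (8 * Real.pi) := by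
    rw [coarseG_eq vs ws v w hw hws, norm_smul, Real.norm_eq_abs, mul_pow, sq_abs]
    have hX : ‖((∑ i, v i ^ 2 + (∑ i, v i) ^ 2 - (∑ i, v i) * (∑ i, vs i) + ∑ i, v i * vs i)
            - ∑ i, v i * vs i) • w - (∑ i, v i * vs i) • ws‖^2
        = ((∑ i, v i ^ 2 + (∑ i, v i) ^ 2 - (∑ i, v i) * (∑ i, vs i) + ∑ i, v i * vs i)
            - ∑ i, v i * vs i)^2
          - 2*((∑ i, v i ^ 2 + (∑ i, v i) ^ 2 - (∑ i, v i) * (∑ i, vs i) + ∑ i, v i * vs i)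
            - ∑ i, v i * vs i)*(∑ i, v i * vs i)*⟪w, ws⟫ + (∑ i, v i * vs i)^2 := by
      rw [← real_inner_self_eq_norm_sq]
      simp only [inner_sub_left, inner_sub_right, real_inner_smul_left, real_inner_smul_right,
        real_inner_self_eq_norm_sq, hw, hws, real_inner_comm ws w, norm_smul,
        Real.norm_eq_abs, mul_pow, sq_abs]
      ring
    rw [hX]
    have : (1 / (2 * Real.sqrt (2 * Real.pi)))^2 = 1 / (8 * Real.pi) := by
      rw [div_pow, mul_pow, hR2]; ring
    rw [this]; ring
  -- the correlation term
  have hinner := inner_coarseG_gradW vs ws v w hw hws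
  have hinn0 : (0:ℝ) ≤ ⟪coarseG vs ws v w, gradW vs ws v w⟫ := by
    rw [hinner]; positivity
  -- H - S = 4q + (1 - 2θ/π) S
  have hq := inner_gradV_eq vs ws v w
  set q := ⟪v, gradV vs ws v w⟫ with hqdef
  set S := ∑ i, v i * vs i with hSdef
  set c := ⟪w, ws⟫ with hcdef
  set θ := angle w ws with hθdef
  set u := Real.sqrt (1 - c^2) with hudef
  set G2 := ‖gradV vs ws v w‖^2 with hG2def
  set I := ⟪coarseG vs ws v w, gradW vs ws v w⟫ with hIdef
  have hu0 : 0 ≤ u := Real.sqrt_nonneg _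
  have hG20 : 0 ≤ G2 := sq_nonneg _
  -- D = H - S
  set D := (∑ i, v i ^ 2 + (∑ i, v i) ^ 2 - (∑ i, v i) * (∑ i, vs i) + S) - S with hDdef
  have hD : D = 4*q + (1 - 2*θ/Real.pi)*S := by
    rw [hDdef, hq]; ring
  -- bound q² by C²·G2
  have hq2 : q^2 ≤ C^2 * G2 := by
    have h1 : |q| ≤ ‖v‖ * ‖gradV vs ws v w‖ := by
      rw [hqdef]; exact abs_real_inner_le_norm v _
    have h2 : ‖v‖ * ‖gradV vs ws v w‖ ≤ C * ‖gradV vs ws v w‖ :=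
      mul_le_mul_of_nonneg_right hv (norm_nonneg _)
    have h3 : |q| ≤ C * ‖gradV vs ws v w‖ := h1.trans h2
    have h4 : q^2 ≤ (C * ‖gradV vs ws v w‖)^2 := by
      rw [← sq_abs q]
      exact pow_le_pow_left₀ (abs_nonneg q) h3 2
    rw [hG2def]; nlinarith
  clear_value q S c G2 I D
  -- the ψ bound
  have hψ : (1 - 2*θ/Real.pi)^2 - 2*c*(1 - 2*θ/Real.pi) + 1 ≤ Real.pi^2/4 * u := by
    have := psi_bound hθ0 hθπ
    rw [hcos, hsin] at this
    exact this
  set τ := 1 - 2*θ/Real.pi with hτdef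
  clear_value τ u θ
  have hcc : c^2 ≤ 1 := by
    have h := pow_le_pow_left₀ (abs_nonneg c) hc1 2
    simpa [sq_abs] using h
  clear hq hqdef hSdef hDdef hG2def hIdef hcdef hθdef hudef hτdef hcos hsin hθ0 hθπ hc1 hv
  -- quadratic bound
  have hquad : D^2 - 2*D*S*c + S^2
      ≤ 32*q^2 + 2*S^2*(τ^2 - 2*c*τ + 1) := by
    have key : 32*q^2 + 2*S^2*(τ^2 - 2*c*τ + 1) - (D^2 - 2*D*S*c + S^2)
        = (4*q - S*(τ - c))^2 + S^2*(1 - c^2) := by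
      rw [hD]; ring
    have h1 := sq_nonneg (4*q - S*(τ - c))
    have h2 : 0 ≤ S^2*(1 - c^2) :=
      mul_nonneg (sq_nonneg S) (by linarith : (0:ℝ) ≤ 1 - c^2)
    linarith
  -- put together
  have hSu : S^2 * u = 4 * Real.pi * Real.sqrt (2*Real.pi) * I := by
    have hX0 : (4 * Real.pi * Real.sqrt (2*Real.pi)) ≠ 0 := by positivity
    rw [hinner, mul_div_cancel₀ _ hX0]
  have hchain : ‖coarseG vs ws v w‖^2 ≤ 4*C^2/Real.pi * G2 + Real.pi^2 * Real.sqrt (2*Real.pi)/4 * I := by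
    rw [hGnorm]
    have hb1 : D^2 - 2*D*S*c + S^2 ≤ 32*(C^2*G2) + 2*S^2*(Real.pi^2/4 * u) := by
      have hmul := mul_le_mul_of_nonneg_left hψ (by positivity : (0:ℝ) ≤ 2*S^2)
      linarith [hquad, hq2, hmul]
    have hb2 : 2*S^2*(Real.pi^2/4 * u) = Real.pi^2/2 * (S^2 * u) := by ring
    rw [hb2, hSu] at hb1
    have hb3 : (D^2 - 2*D*S*c + S^2) / (8*Real.pi)
        ≤ (32*(C^2*G2) + Real.pi^2/2 * (4*Real.pi*Real.sqrt (2*Real.pi)*I)) / (8*Real.pi) := by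
      exact (div_le_div_iff_of_pos_right (by positivity : (0:ℝ) < 8*Real.pi)).2 hb1
    refine hb3.trans_eq ?_
    field_simp
    ring
  have ht1 : 0 ≤ (Real.pi^2 * Real.sqrt (2*Real.pi)/4 + 1) * G2 := by positivity
  have ht2 : 0 ≤ (4*C^2/Real.pi + 1) * I := mul_nonneg (by positivity) hinn0
  have hexp : (4*C^2/Real.pi + Real.pi^2 * Real.sqrt (2*Real.pi)/4 + 1) * (G2 + I)
      = 4*C^2/Real.pi * G2 + Real.pi^2 * Real.sqrt (2*Real.pi)/4 * I
        + ((Real.pi^2 * Real.sqrt (2*Real.pi)/4 + 1) * G2 + (4*C^2/Real.pi + 1) * I) := by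
    ring
  linarith [hexp, hchain, ht1, ht2]
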